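/- Let H be a finite graph and σ a capacity function on H. Let P_1 and P_2 be two vertex-disjoint paths in H with σ(e) = (4,1) for every edge e of P_1 and of P_2, such that every internal vertex of P_1 and of P_2 has degree 3 in H, and σ(e) ⊆ (1,4) for every edge e not on P_1 ∪ P_2 incident to an internal vertex of P_1 or P_2. Suppose H contains two edges a c and b d, where a and b are internal vertices of P_1 at even distance along P_1 and c and d are internal vertices of P_2 at odd distance along P_2 (so these two edges together with subpaths of P_1 and P_2 form an odd cycle). Then H admits no σ-faithful flow, i.e. there is no modular 5-flow f on H with f(e) ∈ σ(e) for every edge e of H. -/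
import Mathlib


open scoped Classical

/-- A finite multigraph: finite vertex and edge types together with a reference
orientation recorded by source and target maps.  The underlying undirected graph
is obtained by forgetting the directions; reorienting an edge corresponds to
negating the value of a flow on it. -/
structure Multigraph where
  V : Type
  E : Type
  [fintypeV : Fintype V]
  [fintypeE : Fintype E]
  src : E → V
  tgt : E → V

attribute [instance] Multigraph.fintypeV Multigraph.fintypeE

namespace Multigraph

/-- `f` is a flow with respect to the reference orientation: at every vertex the
sum of the values on incoming edges equals the sum on outgoing edges. -/
def IsFlow (G : Multigraph) {M : Type*} [AddCommMonoid M] (f : G.E → M) : Prop :=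
  ∀ v : G.V, (∑ e : G.E, Set.indicator {e' : G.E | G.tgt e' = v} f e)
           = ∑ e : G.E, Set.indicator {e' : G.E | G.src e' = v} f e

/-- The edge `e` joins the vertices `v` and `w` (in either direction). -/
def Joins (G : Multigraph) (e : G.E) (v w : G.V) : Prop :=
  (G.src e = v ∧ G.tgt e = w) ∨ (G.src e = w ∧ G.tgt e = v)

/-- `v` and `w` are adjacent: some edge joins them. -/
def Adj (G : Multigraph) (v w : G.V) : Prop := ∃ e : G.E, G.Joins e v w

/-- The degree of a vertex (loops count twice). -/
noncomputable def degree (G : Multigraph) (v : G.V) : ℕ :=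
  Nat.card {e : G.E // G.src e = v} + Nat.card {e : G.E // G.tgt e = v}

/-- A set of edges is an even subgraph if every vertex is incident with an even
number of its edges (loops counting twice). -/
def IsEvenSubgraph (G : Multigraph) (J : Set G.E) : Prop :=
  ∀ v : G.V, Even (Nat.card {e : G.E // e ∈ J ∧ G.src e = v}
    + Nat.card {e : G.E // e ∈ J ∧ G.tgt e = v})

/-- `G` has a circular nowhere-zero `r`-flow: for some orientation (encoded by
possibly negating values with respect to the reference orientation) there is a
real-valued flow with all values in `[1, r-1]`. -/
def HasCNZF (G : Multigraph) (r : ℝ) : Prop :=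
  ∃ f : G.E → ℝ, G.IsFlow f ∧
    ∀ e : G.E, f e ∈ Set.Icc 1 (r - 1) ∨ -f e ∈ Set.Icc 1 (r - 1)

/-- The circular flow number `Φ_c(G)`, as an extended real (`⊤` if no `r`-CNZF
exists for any `r ≥ 2`). -/
noncomputable def flowNumber (G : Multigraph) : EReal :=
  sInf {x : EReal | ∃ r : ℝ, x = (r : EReal) ∧ 2 ≤ r ∧ G.HasCNZF r}

/-- `G` has a modular circular nowhere-zero `r`-flow: a flow with values in
`ℝ/rℤ` lying (up to reorientation) in the image of `[1, r-1]`. -/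
def HasMCNZF (G : Multigraph) (r : ℝ) : Prop :=
  ∃ f : G.E → AddCircle r, G.IsFlow f ∧
    ∀ e : G.E, f e ∈ (fun t : ℝ => (t : AddCircle r)) '' Set.Icc 1 (r - 1) ∨
      -f e ∈ (fun t : ℝ => (t : AddCircle r)) '' Set.Icc 1 (r - 1)

/-- `G` has a sub-`r`-MCNZF: an `r`-MCNZF all of whose values lie in the image
of the open interval `(1, r-1)`. -/
def HasSubMCNZF (G : Multigraph) (r : ℝ) : Prop :=
  ∃ f : G.E → AddCircle r, G.IsFlow f ∧
    ∀ e : G.E, f e ∈ (fun t : ℝ => (t : AddCircle r)) '' Set.Ioo 1 (r - 1) ∨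
      -f e ∈ (fun t : ℝ => (t : AddCircle r)) '' Set.Ioo 1 (r - 1)

end Multigraph

/-- The right endpoint representative: the representative of `b` in `(a, a+5]`. -/
def arcEnd (a b : ℤ) : ℤ := a + (if (b - a) % 5 = 0 then 5 else (b - a) % 5)

/-- The open integer arc `(a, b)` in `ℝ/5ℤ`: the image of the real interval
`(a, b')` where `b'` is the representative of `b` in `(a, a+5]`. -/
def arc (a b : ℤ) : Set (AddCircle (5 : ℝ)) :=
  (fun t : ℝ => (t : AddCircle (5 : ℝ))) '' Set.Ioo (a : ℝ) (arcEnd a b : ℝ)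

/-- `SI_5`: the symmetric subsets of `ℝ/5ℤ` that are unions of open integer arcs. -/
def SI5 : Set (Set (AddCircle (5 : ℝ))) :=
  {A | (∀ z, z ∈ A ↔ -z ∈ A) ∧ ∃ s : Set (ℤ × ℤ), A = ⋃ p ∈ s, arc p.1 p.2}

/-- The measure `Me A`: the number of (distinct) open unit arcs contained in `A`. -/
noncomputable def Me (A : Set (AddCircle (5 : ℝ))) : ℕ :=
  Set.ncard {B : Set (AddCircle (5 : ℝ)) | B ⊆ A ∧ ∃ k : ℤ, B = arc k (k + 1)}

namespace Multigraph

/-- `G⁺_{xy}`: the graph `G` with one extra edge `e⁺` from `x` to `y`. -/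
def addEdge (G : Multigraph) (x y : G.V) : Multigraph where
  V := G.V
  E := Option G.E
  src := fun e => e.elim x G.src
  tgt := fun e => e.elim y G.tgt

/-- The open 5-capacity of the generalised edge `G_{xy}`: all values that can pass
from `x` to `y` through `G` by a modular 5-flow of `G⁺_{xy}` whose values on the
edges of `G` lie in the open arc `(1,4)`. -/
def CP5 (G : Multigraph) (x y : G.V) : Set (AddCircle (5 : ℝ)) :=
  {w | ∃ f : Option G.E → AddCircle (5 : ℝ),
    (G.addEdge x y).IsFlow f ∧ (∀ e : G.E, f (some e) ∈ arc 1 4) ∧ f none = w}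

/-- `G` has a sub-5-MCNZF: a modular 5-flow with all values in the open arc `(1,4)`. -/
def HasSub5 (G : Multigraph) : Prop :=
  ∃ f : G.E → AddCircle (5 : ℝ), G.IsFlow f ∧ ∀ e : G.E, f e ∈ arc 1 4

/-- `G` has a `σ`-faithful flow: a modular 5-flow `f` with `f e ∈ σ e` for all `e`. -/
def HasFaithful (G : Multigraph) (σ : G.E → Set (AddCircle (5 : ℝ))) : Prop :=
  ∃ f : G.E → AddCircle (5 : ℝ), G.IsFlow f ∧ ∀ e : G.E, f e ∈ σ e

/-- `G` has a `σ_{J,A}`-faithful flow: a modular 5-flow with values in `A` on the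
edges of `J` and in the open arc `(1,4)` on all other edges. -/
def HasFaithfulOn (G : Multigraph) (J : Set G.E) (A : Set (AddCircle (5 : ℝ))) : Prop :=
  ∃ f : G.E → AddCircle (5 : ℝ), G.IsFlow f ∧ (∀ e ∈ J, f e ∈ A) ∧ ∀ e ∉ J, f e ∈ arc 1 4

end Multigraph

/-- Cyclic successor on `Fin n`. -/
def rot (n : ℕ) (i : Fin n) : Fin n := ⟨(i.val + 1) % n, Nat.mod_lt _ i.pos⟩

/-- The wheel `W_n`: the external cycle `v_1 … v_n` (vertices `some i`, rim edges
`Sum.inl i` from `v_i` to `v_{i+1}`) together with a hub `v_c = none` joined to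
every rim vertex by the spokes `Sum.inr i`. -/
def wheel (n : ℕ) : Multigraph where
  V := Option (Fin n)
  E := Fin n ⊕ Fin n
  src := fun e => match e with
    | Sum.inl i => some i
    | Sum.inr _ => none
  tgt := fun e => match e with
    | Sum.inl i => some (rot n i)
    | Sum.inr i => some i

/-! ### Auxiliary lemmas -/

section Aux

lemma coe5_sub (x y : ℝ) :
    ((x - y : ℝ) : AddCircle (5:ℝ)) = (x : AddCircle (5:ℝ)) - (y : AddCircle (5:ℝ)) :=
  QuotientAddGroup.mk_sub _ x y

lemma coe5_neg (x : ℝ) :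
    ((-x : ℝ) : AddCircle (5:ℝ)) = -(x : AddCircle (5:ℝ)) :=
  QuotientAddGroup.mk_neg _ x

lemma coe5_period {r s : ℝ} (h : (r : AddCircle (5:ℝ)) = (s : AddCircle (5:ℝ))) :
    ∃ n : ℤ, r - s = (n:ℝ) * 5 := by
  have h0 : ((r - s : ℝ) : AddCircle (5:ℝ)) = 0 := by rw [coe5_sub, h, sub_self]
  obtain ⟨n, hn⟩ := (AddCircle.coe_eq_zero_iff (5:ℝ)).1 h0
  exact ⟨n, by rw [← hn]; push_cast [zsmul_eq_mul]; ring⟩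

lemma coe5_eq {r s : ℝ} (h : (r : AddCircle (5:ℝ)) = (s : AddCircle (5:ℝ)))
    (hd : |r - s| < 5) : r = s := by
  obtain ⟨n, hn⟩ := coe5_period h
  have habs := abs_lt.1 hd
  have hn0 : n = 0 := by
    rcases lt_trichotomy n 0 with h' | h' | h'
    · have : (n:ℝ) ≤ -1 := by exact_mod_cast (show n ≤ -1 by omega)
      nlinarith
    · exact h'
    · have : (1:ℝ) ≤ n := by exact_mod_cast h'
      nlinarith
  rw [hn0] at hn; simp at hn; linarith

lemma arc41_eq : arc 4 1 = (fun t : ℝ => (t : AddCircle (5 : ℝ))) '' Set.Ioo (4:ℝ) 6 := by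
  have h : arcEnd 4 1 = 6 := by decide
  unfold arc; rw [h]; norm_num

lemma arc14_eq : arc 1 4 = (fun t : ℝ => (t : AddCircle (5 : ℝ))) '' Set.Ioo (1:ℝ) 4 := by
  have h : arcEnd 1 4 = 4 := by decide
  unfold arc; rw [h]; norm_num

lemma step_lemma {u v : ℝ} (hu : u ∈ Set.Ioo (4:ℝ) 6) (hv : v ∈ Set.Ioo (4:ℝ) 6)
    (h : ((v - u : ℝ) : AddCircle (5:ℝ)) ∈ arc 1 4) :
    (1 < v - u ∧ v - u < 2 ∧ u < 5 ∧ 5 < v) ∨ (-2 < v - u ∧ v - u < -1 ∧ 5 < u ∧ v < 5) := by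
  rw [arc14_eq] at h
  obtain ⟨t, ⟨ht1, ht4⟩, hte⟩ := h
  obtain ⟨n, hn⟩ := coe5_period (hte.symm)
  obtain ⟨hu1, hu2⟩ := hu; obtain ⟨hv1, hv2⟩ := hv
  have hcases : n = -1 ∨ n = 0 := by
    have h1 : (-2:ℝ) < n := by nlinarith
    have h2 : (n:ℝ) < 1 := by nlinarith
    have h1' : (-2:ℤ) < n := by exact_mod_cast h1
    have h2' : n < 1 := by exact_mod_cast h2
    omega
  rcases hcases with h' | h' <;> rw [h'] at hn
  · right; push_cast at hn
    exact ⟨by linarith, by linarith, by linarith, by linarith⟩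
  · left; push_cast at hn
    exact ⟨by linarith, by linarith, by linarith, by linarith⟩

/-- The signed contribution of the edge `e`, as seen from the vertex `v`. -/
noncomputable def cv (H : Multigraph) {M : Type*} [AddCommGroup M]
    (f : H.E → M) (v : H.V) (e : H.E) : M :=
  (if H.tgt e = v then f e else 0) - (if H.src e = v then f e else 0)

lemma sum_cv (H : Multigraph) {M : Type*} [AddCommGroup M] (f : H.E → M)
    (hf : H.IsFlow f) (v : H.V) : ∑ e : H.E, cv H f v e = 0 := by
  have := hf v
  simp only [Set.indicator_apply, Set.mem_setOf_eq] at this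
  simp only [cv, Finset.sum_sub_distrib, this, sub_self]

/-- Incidence count of an edge at a vertex (loops counting twice). -/
noncomputable def nv (H : Multigraph) (v : H.V) (e : H.E) : ℕ :=
  (if H.src e = v then 1 else 0) + (if H.tgt e = v then 1 else 0)

lemma degree_eq_sum (H : Multigraph) (v : H.V) : H.degree v = ∑ e : H.E, nv H v e := by
  unfold Multigraph.degree nv
  rw [Finset.sum_add_distrib]
  congr 1 <;>
  · rw [Nat.card_eq_fintype_card, Fintype.card_subtype, Finset.card_filter]

lemma cv_eq_zero_of_nv {H : Multigraph} {M : Type*} [AddCommGroup M] {f : H.E → M}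
    {v : H.V} {e : H.E} (h : nv H v e = 0) : cv H f v e = 0 := by
  unfold nv at h; unfold cv
  by_cases h1 : H.src e = v <;> by_cases h2 : H.tgt e = v <;> simp [h1, h2] at h ⊢

lemma three_term (H : Multigraph) {M : Type*} [AddCommGroup M] (f : H.E → M)
    (hflow : H.IsFlow f) (v : H.V) (hdeg : H.degree v = 3)
    (u1 u2 : H.E) (hne : u1 ≠ u2)
    (w1 w2 : H.V) (hw1 : H.Joins u1 v w1) (hw2 : H.Joins u2 v w2)
    (hv1 : w1 ≠ v) (hv2 : w2 ≠ v) :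
    ∃ e3 : H.E, e3 ≠ u1 ∧ e3 ≠ u2 ∧ nv H v e3 = 1 ∧
      cv H f v u1 + cv H f v u2 + cv H f v e3 = 0 ∧
      (∀ e : H.E, nv H v e ≠ 0 → e = u1 ∨ e = u2 ∨ e = e3) := by
  classical
  have hn1 : nv H v u1 = 1 := by
    rcases hw1 with ⟨h1, h2⟩ | ⟨h1, h2⟩ <;> unfold nv <;>
      simp [h1, h2, hv1, Ne.symm hv1]
  have hn2 : nv H v u2 = 1 := by
    rcases hw2 with ⟨h1, h2⟩ | ⟨h1, h2⟩ <;> unfold nv <;>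
      simp [h1, h2, hv2, Ne.symm hv2]
  set s : Finset H.E := Finset.univ \ {u1, u2} with hs
  have hsum : ∑ e ∈ s, nv H v e = 1 := by
    have h1 : ∑ e ∈ ({u1, u2} : Finset H.E), nv H v e = 2 := by
      rw [Finset.sum_pair hne, hn1, hn2]
    have h2 : ∑ e ∈ s, nv H v e + ∑ e ∈ ({u1,u2} : Finset H.E), nv H v e
        = ∑ e : H.E, nv H v e := by
      rw [hs]; exact Finset.sum_sdiff (Finset.subset_univ _)
    have h3 := degree_eq_sum H v
    omega
  obtain ⟨e3, he3s, he3⟩ :=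
    Finset.exists_ne_zero_of_sum_ne_zero (by omega : ∑ e ∈ s, nv H v e ≠ 0)
  have hrest : ∑ e ∈ s.erase e3, nv H v e + nv H v e3 = 1 := by
    rw [Finset.sum_erase_add _ _ he3s]; exact hsum
  have hne3 : nv H v e3 = 1 := by omega
  have hzero : ∀ e ∈ s.erase e3, nv H v e = 0 := by
    intro e he
    have h0 : ∑ e ∈ s.erase e3, nv H v e = 0 := by omega
    exact Finset.sum_eq_zero_iff.1 h0 e he
  have he3u1 : e3 ≠ u1 := by
    intro h; rw [hs] at he3s; simp [h] at he3s
  have he3u2 : e3 ≠ u2 := by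
    intro h; rw [hs] at he3s; simp [h] at he3s
  refine ⟨e3, he3u1, he3u2, hne3, ?_, ?_⟩
  · have htotal := sum_cv H f hflow v
    have hsub : ∑ e : H.E, cv H f v e = ∑ e ∈ ({u1, u2, e3} : Finset H.E), cv H f v e := by
      symm
      apply Finset.sum_subset (Finset.subset_univ _)
      intro e _ he
      simp only [Finset.mem_insert, Finset.mem_singleton, not_or] at he
      apply cv_eq_zero_of_nv
      apply hzero
      rw [Finset.mem_erase, hs]
      simp [he.1, he.2.1, he.2.2]
    rw [hsub] at htotal
    rw [Finset.sum_insert (by simp [hne, Ne.symm he3u1]),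
      Finset.sum_pair (Ne.symm he3u2)] at htotal
    rw [← add_assoc] at htotal; exact htotal
  · intro e he
    by_contra hc
    push_neg at hc
    obtain ⟨h1, h2, h3⟩ := hc
    exact he (hzero e (by rw [Finset.mem_erase, hs]; simp [h1, h2, h3]))

lemma joins_symm {H : Multigraph} {e : H.E} {v w : H.V} (h : H.Joins e v w) :
    H.Joins e w v := by
  unfold Multigraph.Joins at *; tauto

lemma nv_ne_zero_iff {H : Multigraph} {v : H.V} {e : H.E} :
    nv H v e ≠ 0 ↔ (H.src e = v ∨ H.tgt e = v) := by
  unfold nv; by_cases h1 : H.src e = v <;> by_cases h2 : H.tgt e = v <;> simp [h1, h2]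

lemma cv_mem {H : Multigraph} {σ : H.E → Set (AddCircle (5:ℝ))}
    (hσsym : ∀ e z, z ∈ σ e ↔ -z ∈ σ e)
    {f : H.E → AddCircle (5:ℝ)} (hmem : ∀ e, f e ∈ σ e) {v : H.V} {e : H.E}
    (h : nv H v e = 1) : cv H f v e ∈ σ e := by
  unfold nv at h; unfold cv
  by_cases h1 : H.src e = v <;> by_cases h2 : H.tgt e = v <;> simp [h1, h2] at h ⊢
  · exact (hσsym e (f e)).1 (hmem e)
  · exact hmem e

lemma cv_opp {H : Multigraph} {M : Type*} [AddCommGroup M] {f : H.E → M} {e : H.E}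
    {v w : H.V} (h : H.Joins e v w) (hvw : v ≠ w) : cv H f v e = -(cv H f w e) := by
  unfold cv
  rcases h with ⟨h1, h2⟩ | ⟨h1, h2⟩ <;> simp [h1, h2, hvw, Ne.symm hvw]

lemma internal_step (H : Multigraph) (σ : H.E → Set (AddCircle (5:ℝ)))
    (hσsym : ∀ e z, z ∈ σ e ↔ -z ∈ σ e)
    (f : H.E → AddCircle (5:ℝ)) (hflow : H.IsFlow f) (hmem : ∀ e, f e ∈ σ e)
    {k : ℕ} (p : Fin (k+1) → H.V) (pe : Fin k → H.E)
    (hp : Function.Injective p)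
    (hpe : ∀ i, H.Joins (pe i) (p i.castSucc) (p i.succ))
    (g : Fin k → AddCircle (5:ℝ))
    (hgt : ∀ i, cv H f (p i.castSucc) (pe i) = -g i)
    (hgh : ∀ i, cv H f (p i.succ) (pe i) = g i)
    (i : ℕ) (h0 : 0 < i) (hik : i < k) (hik1 : i < k + 1) (hik2 : i - 1 < k)
    (hdegv : H.degree (p ⟨i, hik1⟩) = 3)
    (hoffv : ∀ e, e ∉ Set.range pe →
        (H.src e = p ⟨i, hik1⟩ ∨ H.tgt e = p ⟨i, hik1⟩) → σ e ⊆ arc 1 4) :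
    g ⟨i, hik⟩ - g ⟨i-1, hik2⟩ ∈ arc 1 4 ∧
    ∀ e, e ∉ Set.range pe → (H.src e = p ⟨i, hik1⟩ ∨ H.tgt e = p ⟨i, hik1⟩) →
       cv H f (p ⟨i, hik1⟩) e = g ⟨i, hik⟩ - g ⟨i-1, hik2⟩ := by
  set iF : Fin k := ⟨i, hik⟩ with hiF
  set iP : Fin k := ⟨i-1, hik2⟩ with hiP
  set vF : Fin (k+1) := ⟨i, hik1⟩ with hvF
  have hsucc : iP.succ = vF := by
    apply Fin.ext; simp [hiP, hvF]; omega
  have hcast : iF.castSucc = vF := by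
    apply Fin.ext; simp [hiF, hvF]
  have hw1 : H.Joins (pe iP) (p vF) (p iP.castSucc) := by
    have := hpe iP; rw [hsucc] at this; exact joins_symm this
  have hw2 : H.Joins (pe iF) (p vF) (p iF.succ) := by
    have := hpe iF; rw [hcast] at this; exact this
  have hv1 : p iP.castSucc ≠ p vF := by
    intro h; have := hp h
    have : (iP.castSucc : Fin (k+1)).val = vF.val := by rw [this]
    simp [hiP, hvF] at this; omega
  have hv2 : p iF.succ ≠ p vF := by
    intro h; have := hp h
    have : (iF.succ : Fin (k+1)).val = vF.val := by rw [this]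
    simp [hiF, hvF] at this
  have hne : pe iP ≠ pe iF := by
    intro h
    have h1 := hpe iP; rw [h] at h1
    have h2 := hpe iF
    rcases h1 with ⟨a1, a2⟩ | ⟨a1, a2⟩ <;> rcases h2 with ⟨b1, b2⟩ | ⟨b1, b2⟩ <;>
      have t1 := hp (a1.symm.trans b1) <;>
      have t2 := hp (a2.symm.trans b2) <;>
      simp only [hiP, hiF, Fin.castSucc_mk, Fin.succ_mk, Fin.mk.injEq] at t1 t2 <;>
      omega
  obtain ⟨e3, he31, he32, hn3, hsum3, huniq⟩ :=
    three_term H f hflow (p vF) hdegv (pe iP) (pe iF) hne _ _ hw1 hw2 hv1 hv2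
  have hc1 : cv H f (p vF) (pe iP) = g iP := by rw [← hsucc]; exact hgh iP
  have hc2 : cv H f (p vF) (pe iF) = -g iF := by rw [← hcast]; exact hgt iF
  rw [hc1, hc2] at hsum3
  have hcv3 : cv H f (p vF) e3 = g iF - g iP := by
    rw [← sub_eq_zero, ← hsum3]; abel
  have he3range : e3 ∉ Set.range pe := by
    rintro ⟨j, rfl⟩
    have hinc := nv_ne_zero_iff.1 (by omega : nv H (p vF) (pe j) ≠ 0)
    have hj := hpe j
    have : j.castSucc = vF ∨ j.succ = vF := by
      rcases hj with ⟨a1, a2⟩ | ⟨a1, a2⟩ <;> rcases hinc with h | h <;>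
        [ exact Or.inl (hp (a1.symm.trans h).symm).symm ;
          exact Or.inr (hp (a2.symm.trans h).symm).symm ;
          exact Or.inr (hp (a1.symm.trans h).symm).symm ;
          exact Or.inl (hp (a2.symm.trans h).symm).symm ]
    rcases this with h | h
    · apply he32; congr 1
      apply Fin.ext
      have := congrArg Fin.val h; simp [hvF] at this; simp [hiF, this]
    · apply he31; congr 1
      apply Fin.ext
      have := congrArg Fin.val h; simp [hvF] at this; simp [hiP]; omega
  have hsecond : ∀ e, e ∉ Set.range pe → (H.src e = p vF ∨ H.tgt e = p vF) →
      cv H f (p vF) e = g iF - g iP := by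
    intro e her hinc
    rcases huniq e (nv_ne_zero_iff.2 hinc) with h | h | h
    · exact absurd h (by rintro rfl; exact her ⟨iP, rfl⟩)
    · exact absurd h (by rintro rfl; exact her ⟨iF, rfl⟩)
    · rw [h]; exact hcv3
  refine ⟨?_, hsecond⟩
  have hσ3 := hoffv e3 he3range (nv_ne_zero_iff.1 (by omega))
  have hm := cv_mem hσsym hmem hn3
  rw [hcv3] at hm
  exact hσ3 hm

end Aux

lemma par_step1 {XS En X0 : Prop} (h1 : ¬XS) (h2 : En ↔ X0) : XS ↔ (¬En ↔ X0) := by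
  tauto

lemma par_step2 {XS En X0 : Prop} (h1 : XS) (h2 : ¬(En ↔ X0)) : XS ↔ (¬En ↔ X0) := by
  tauto

lemma parity_contra {XA XB YC YD X0 Y0 EA EB EC ED : Prop}
    (kAC : XA ↔ ¬YC) (kBD : XB ↔ ¬YD)
    (pa : XA ↔ (EA ↔ X0)) (pb : XB ↔ (EB ↔ X0))
    (pc : YC ↔ (EC ↔ Y0)) (pd : YD ↔ (ED ↔ Y0))
    (hEE : EA ↔ EB) (hOO : ¬(EC ↔ ED)) : False := by
  tauto

set_option maxHeartbeats 2000000 in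
/-- let `P_1` and `P_2` be two vertex-disjoint paths of
`(4,1)`-edges in `H` whose internal vertices all have degree 3 in `H`, such that
every edge not on `P_1 ∪ P_2` incident with an internal vertex of `P_1` or `P_2`
has capacity contained in `(1,4)`.  If `H` contains edges `a c` and `b d`, with
`a, b` internal vertices of `P_1` at even distance along `P_1` and `c, d`
internal vertices of `P_2` at odd distance along `P_2`, then `H` has no
`σ`-faithful flow. -/
theorem two_paths_no_faithful (H : Multigraph)
    (σ : H.E → Set (AddCircle (5 : ℝ)))
    (hσsym : ∀ (e : H.E) (z : AddCircle (5 : ℝ)), z ∈ σ e ↔ -z ∈ σ e)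
    (k l : ℕ)
    (p₁ : Fin (k + 1) → H.V) (pe₁ : Fin k → H.E)
    (p₂ : Fin (l + 1) → H.V) (pe₂ : Fin l → H.E)
    (hp₁ : Function.Injective p₁) (hp₂ : Function.Injective p₂)
    (hdisj : ∀ (i : Fin (k + 1)) (j : Fin (l + 1)), p₁ i ≠ p₂ j)
    (hpe₁ : ∀ i : Fin k, H.Joins (pe₁ i) (p₁ i.castSucc) (p₁ i.succ))
    (hpe₂ : ∀ i : Fin l, H.Joins (pe₂ i) (p₂ i.castSucc) (p₂ i.succ))
    (hσ₁ : ∀ i : Fin k, σ (pe₁ i) = arc 4 1)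
    (hσ₂ : ∀ i : Fin l, σ (pe₂ i) = arc 4 1)
    (hdeg₁ : ∀ i : Fin (k + 1), 0 < i.val → i.val < k → H.degree (p₁ i) = 3)
    (hdeg₂ : ∀ i : Fin (l + 1), 0 < i.val → i.val < l → H.degree (p₂ i) = 3)
    (hoff : ∀ e : H.E, e ∉ Set.range pe₁ → e ∉ Set.range pe₂ →
      ((∃ i : Fin (k + 1), 0 < i.val ∧ i.val < k ∧ (H.src e = p₁ i ∨ H.tgt e = p₁ i)) ∨
       (∃ i : Fin (l + 1), 0 < i.val ∧ i.val < l ∧ (H.src e = p₂ i ∨ H.tgt e = p₂ i))) →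
      σ e ⊆ arc 1 4)
    (a b : Fin (k + 1)) (c d : Fin (l + 1))
    (ha : 0 < a.val) (hak : a.val < k) (hb : 0 < b.val) (hbk : b.val < k)
    (hc : 0 < c.val) (hcl : c.val < l) (hd : 0 < d.val) (hdl : d.val < l)
    (hab : a ≠ b) (hcd : c ≠ d)
    (heven : Even (Nat.dist a.val b.val)) (hodd : Odd (Nat.dist c.val d.val))
    (e₁ e₂ : H.E) (he₁ : H.Joins e₁ (p₁ a) (p₂ c)) (he₂ : H.Joins e₂ (p₁ b) (p₂ d)) :
    ¬ H.HasFaithful σ := by 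
  rintro ⟨f, hflow, hmem⟩
  have hak2 : a.val - 1 < k := by omega
  have hbk2 : b.val - 1 < k := by omega
  have hcl2 : c.val - 1 < l := by omega
  have hdl2 : d.val - 1 < l := by omega
  have k0 : 0 < k := by omega
  have l0 : 0 < l := by omega
  -- orient the path edges along the paths
  have hg1ex : ∀ i : Fin k, ∃ gv : AddCircle (5:ℝ),
      cv H f (p₁ i.castSucc) (pe₁ i) = -gv ∧ cv H f (p₁ i.succ) (pe₁ i) = gv ∧
      gv ∈ arc 4 1 := by
    intro i
    have hvne : p₁ i.castSucc ≠ p₁ i.succ := by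
      intro h; have := congrArg Fin.val (hp₁ h)
      simp [Fin.coe_castSucc, Fin.val_succ] at this
    have hm : f (pe₁ i) ∈ arc 4 1 := by rw [← hσ₁ i]; exact hmem _
    rcases hpe₁ i with ⟨h1, h2⟩ | ⟨h1, h2⟩
    · refine ⟨f (pe₁ i), ?_, ?_, hm⟩ <;> unfold cv <;> simp [h1, h2, hvne, Ne.symm hvne]
    · refine ⟨-f (pe₁ i), ?_, ?_, ?_⟩
      · unfold cv; simp [h1, h2, hvne, Ne.symm hvne]
      · unfold cv; simp [h1, h2, hvne, Ne.symm hvne]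
      · rw [← hσ₁ i] at hm ⊢; exact (hσsym _ _).1 hm
  have hg2ex : ∀ i : Fin l, ∃ gv : AddCircle (5:ℝ),
      cv H f (p₂ i.castSucc) (pe₂ i) = -gv ∧ cv H f (p₂ i.succ) (pe₂ i) = gv ∧
      gv ∈ arc 4 1 := by
    intro i
    have hvne : p₂ i.castSucc ≠ p₂ i.succ := by
      intro h; have := congrArg Fin.val (hp₂ h)
      simp [Fin.coe_castSucc, Fin.val_succ] at this
    have hm : f (pe₂ i) ∈ arc 4 1 := by rw [← hσ₂ i]; exact hmem _
    rcases hpe₂ i with ⟨h1, h2⟩ | ⟨h1, h2⟩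
    · refine ⟨f (pe₂ i), ?_, ?_, hm⟩ <;> unfold cv <;> simp [h1, h2, hvne, Ne.symm hvne]
    · refine ⟨-f (pe₂ i), ?_, ?_, ?_⟩
      · unfold cv; simp [h1, h2, hvne, Ne.symm hvne]
      · unfold cv; simp [h1, h2, hvne, Ne.symm hvne]
      · rw [← hσ₂ i] at hm ⊢; exact (hσsym _ _).1 hm
  choose g₁ hg₁t hg₁h hg₁m using hg1ex
  choose g₂ hg₂t hg₂h hg₂m using hg2ex
  -- real lifts in (4,6)
  have hxex : ∀ i : Fin k, ∃ t : ℝ, t ∈ Set.Ioo (4:ℝ) 6 ∧ (t : AddCircle (5:ℝ)) = g₁ i := by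
    intro i; have := hg₁m i; rw [arc41_eq] at this
    obtain ⟨t, ht, h⟩ := this; exact ⟨t, ht, h⟩
  have hyex : ∀ i : Fin l, ∃ t : ℝ, t ∈ Set.Ioo (4:ℝ) 6 ∧ (t : AddCircle (5:ℝ)) = g₂ i := by
    intro i; have := hg₂m i; rw [arc41_eq] at this
    obtain ⟨t, ht, h⟩ := this; exact ⟨t, ht, h⟩
  choose x hxI hxe using hxex
  choose y hyI hye using hyex
  -- internal-vertex analysis on each path
  have main₁ : ∀ (i : ℕ) (h0 : 0 < i) (hik : i < k) (hik1 : i < k+1) (hik2 : i-1 < k),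
      g₁ ⟨i, hik⟩ - g₁ ⟨i-1, hik2⟩ ∈ arc 1 4 ∧
      ∀ e, e ∉ Set.range pe₁ → (H.src e = p₁ ⟨i, hik1⟩ ∨ H.tgt e = p₁ ⟨i, hik1⟩) →
        cv H f (p₁ ⟨i, hik1⟩) e = g₁ ⟨i, hik⟩ - g₁ ⟨i-1, hik2⟩ := by
    intro i h0 hik hik1 hik2
    refine internal_step H σ hσsym f hflow hmem p₁ pe₁ hp₁ hpe₁ g₁ hg₁t hg₁h
      i h0 hik hik1 hik2 (hdeg₁ ⟨i, hik1⟩ h0 hik) ?_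
    intro e her hinc
    refine hoff e her ?_ (Or.inl ⟨⟨i, hik1⟩, h0, hik, hinc⟩)
    rintro ⟨j, rfl⟩
    rcases hpe₂ j with ⟨v1, v2⟩ | ⟨v1, v2⟩ <;> rcases hinc with h | h
    · exact hdisj _ _ ((v1.symm.trans h).symm)
    · exact hdisj _ _ ((v2.symm.trans h).symm)
    · exact hdisj _ _ ((v1.symm.trans h).symm)
    · exact hdisj _ _ ((v2.symm.trans h).symm)
  have main₂ : ∀ (i : ℕ) (h0 : 0 < i) (hik : i < l) (hik1 : i < l+1) (hik2 : i-1 < l),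
      g₂ ⟨i, hik⟩ - g₂ ⟨i-1, hik2⟩ ∈ arc 1 4 ∧
      ∀ e, e ∉ Set.range pe₂ → (H.src e = p₂ ⟨i, hik1⟩ ∨ H.tgt e = p₂ ⟨i, hik1⟩) →
        cv H f (p₂ ⟨i, hik1⟩) e = g₂ ⟨i, hik⟩ - g₂ ⟨i-1, hik2⟩ := by
    intro i h0 hik hik1 hik2
    refine internal_step H σ hσsym f hflow hmem p₂ pe₂ hp₂ hpe₂ g₂ hg₂t hg₂h
      i h0 hik hik1 hik2 (hdeg₂ ⟨i, hik1⟩ h0 hik) ?_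
    intro e her hinc
    refine hoff e ?_ her (Or.inr ⟨⟨i, hik1⟩, h0, hik, hinc⟩)
    rintro ⟨j, rfl⟩
    rcases hpe₁ j with ⟨v1, v2⟩ | ⟨v1, v2⟩ <;> rcases hinc with h | h
    · exact hdisj _ _ (v1.symm.trans h)
    · exact hdisj _ _ (v2.symm.trans h)
    · exact hdisj _ _ (v1.symm.trans h)
    · exact hdisj _ _ (v2.symm.trans h)
  -- step dichotomies
  have dich₁ : ∀ (i : ℕ) (h0 : 0 < i) (hik : i < k) (hik2 : i-1 < k),
      (1 < x ⟨i, hik⟩ - x ⟨i-1, hik2⟩ ∧ x ⟨i, hik⟩ - x ⟨i-1, hik2⟩ < 2 ∧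
        x ⟨i-1, hik2⟩ < 5 ∧ 5 < x ⟨i, hik⟩) ∨
      (-2 < x ⟨i, hik⟩ - x ⟨i-1, hik2⟩ ∧ x ⟨i, hik⟩ - x ⟨i-1, hik2⟩ < -1 ∧
        5 < x ⟨i-1, hik2⟩ ∧ x ⟨i, hik⟩ < 5) := by
    intro i h0 hik hik2
    apply step_lemma (hxI _) (hxI _)
    rw [coe5_sub, hxe, hxe]
    exact (main₁ i h0 hik (by omega) hik2).1
  have dich₂ : ∀ (i : ℕ) (h0 : 0 < i) (hik : i < l) (hik2 : i-1 < l),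
      (1 < y ⟨i, hik⟩ - y ⟨i-1, hik2⟩ ∧ y ⟨i, hik⟩ - y ⟨i-1, hik2⟩ < 2 ∧
        y ⟨i-1, hik2⟩ < 5 ∧ 5 < y ⟨i, hik⟩) ∨
      (-2 < y ⟨i, hik⟩ - y ⟨i-1, hik2⟩ ∧ y ⟨i, hik⟩ - y ⟨i-1, hik2⟩ < -1 ∧
        5 < y ⟨i-1, hik2⟩ ∧ y ⟨i, hik⟩ < 5) := by
    intro i h0 hik hik2
    apply step_lemma (hyI _) (hyI _)
    rw [coe5_sub, hye, hye]
    exact (main₂ i h0 hik (by omega) hik2).1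
  -- parity along each path
  have par₁ : ∀ (i : ℕ) (h : i < k), (x ⟨i, h⟩ < 5 ↔ (Even i ↔ x ⟨0, k0⟩ < 5)) := by
    intro i
    induction i with
    | zero =>
      intro h
      simp only [Even.zero, true_iff]
    | succ n ih =>
      intro h
      have hn : n < k := by omega
      have hd := dich₁ (n+1) (Nat.succ_pos n) h hn
      simp only [Nat.add_sub_cancel] at hd
      have ihn := ih hn
      rw [Nat.even_add_one]
      rcases hd with ⟨p1, p2, p3, p4⟩ | ⟨p1, p2, p3, p4⟩
      · have h1 : ¬ (x ⟨n+1, h⟩ < 5) := by linarith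
        have h2 : x ⟨n, hn⟩ < 5 := p3
        rw [ihn] at h2
        exact par_step1 h1 h2
      · have h1 : x ⟨n+1, h⟩ < 5 := p4
        have h2 : ¬ (x ⟨n, hn⟩ < 5) := by linarith
        rw [ihn] at h2
        exact par_step2 h1 h2
  have par₂ : ∀ (i : ℕ) (h : i < l), (y ⟨i, h⟩ < 5 ↔ (Even i ↔ y ⟨0, l0⟩ < 5)) := by
    intro i
    induction i with
    | zero =>
      intro h
      simp only [Even.zero, true_iff]
    | succ n ih =>
      intro h
      have hn : n < l := by omega
      have hd := dich₂ (n+1) (Nat.succ_pos n) h hn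
      simp only [Nat.add_sub_cancel] at hd
      have ihn := ih hn
      rw [Nat.even_add_one]
      rcases hd with ⟨p1, p2, p3, p4⟩ | ⟨p1, p2, p3, p4⟩
      · have h1 : ¬ (y ⟨n+1, h⟩ < 5) := by linarith
        have h2 : y ⟨n, hn⟩ < 5 := p3
        rw [ihn] at h2
        exact par_step1 h1 h2
      · have h1 : y ⟨n+1, h⟩ < 5 := p4
        have h2 : ¬ (y ⟨n, hn⟩ < 5) := by linarith
        rw [ihn] at h2
        exact par_step2 h1 h2
  -- the edge e₁ links vertex a on P₁ with vertex c on P₂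
  have haE : (⟨a.val, a.isLt⟩ : Fin (k+1)) = a := by apply Fin.ext; rfl
  have hbE : (⟨b.val, b.isLt⟩ : Fin (k+1)) = b := by apply Fin.ext; rfl
  have hcE : (⟨c.val, c.isLt⟩ : Fin (l+1)) = c := by apply Fin.ext; rfl
  have hdE : (⟨d.val, d.isLt⟩ : Fin (l+1)) = d := by apply Fin.ext; rfl
  have he₁r1 : e₁ ∉ Set.range pe₁ := by
    rintro ⟨j, rfl⟩
    rcases he₁ with ⟨u1, u2⟩ | ⟨u1, u2⟩ <;> rcases hpe₁ j with ⟨v1, v2⟩ | ⟨v1, v2⟩ <;>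
      first
        | exact hdisj _ _ (v2.symm.trans u2)
        | exact hdisj _ _ (v1.symm.trans u1)
  have he₁r2 : e₁ ∉ Set.range pe₂ := by
    rintro ⟨j, rfl⟩
    rcases he₁ with ⟨u1, u2⟩ | ⟨u1, u2⟩ <;> rcases hpe₂ j with ⟨v1, v2⟩ | ⟨v1, v2⟩ <;>
      first
        | exact hdisj _ _ ((v1.symm.trans u1).symm)
        | exact hdisj _ _ ((v2.symm.trans u2).symm)
  have he₂r1 : e₂ ∉ Set.range pe₁ := by
    rintro ⟨j, rfl⟩
    rcases he₂ with ⟨u1, u2⟩ | ⟨u1, u2⟩ <;> rcases hpe₁ j with ⟨v1, v2⟩ | ⟨v1, v2⟩ <;>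
      first
        | exact hdisj _ _ (v2.symm.trans u2)
        | exact hdisj _ _ (v1.symm.trans u1)
  have he₂r2 : e₂ ∉ Set.range pe₂ := by
    rintro ⟨j, rfl⟩
    rcases he₂ with ⟨u1, u2⟩ | ⟨u1, u2⟩ <;> rcases hpe₂ j with ⟨v1, v2⟩ | ⟨v1, v2⟩ <;>
      first
        | exact hdisj _ _ ((v1.symm.trans u1).symm)
        | exact hdisj _ _ ((v2.symm.trans u2).symm)
  have he₁i1 : H.src e₁ = p₁ a ∨ H.tgt e₁ = p₁ a := by
    rcases he₁ with ⟨u1, u2⟩ | ⟨u1, u2⟩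
    · exact Or.inl u1
    · exact Or.inr u2
  have he₁i2 : H.src e₁ = p₂ c ∨ H.tgt e₁ = p₂ c := by
    rcases he₁ with ⟨u1, u2⟩ | ⟨u1, u2⟩
    · exact Or.inr u2
    · exact Or.inl u1
  have he₂i1 : H.src e₂ = p₁ b ∨ H.tgt e₂ = p₁ b := by
    rcases he₂ with ⟨u1, u2⟩ | ⟨u1, u2⟩
    · exact Or.inl u1
    · exact Or.inr u2
  have he₂i2 : H.src e₂ = p₂ d ∨ H.tgt e₂ = p₂ d := by
    rcases he₂ with ⟨u1, u2⟩ | ⟨u1, u2⟩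
    · exact Or.inr u2
    · exact Or.inl u1
  have hA := main₁ a.val ha hak a.isLt hak2
  rw [haE] at hA
  have hB := main₁ b.val hb hbk b.isLt hbk2
  rw [hbE] at hB
  have hC := main₂ c.val hc hcl c.isLt hcl2
  rw [hcE] at hC
  have hD := main₂ d.val hd hdl d.isLt hdl2
  rw [hdE] at hD
  have hcva : cv H f (p₁ a) e₁ = g₁ ⟨a.val, hak⟩ - g₁ ⟨a.val - 1, hak2⟩ :=
    hA.2 e₁ he₁r1 he₁i1
  have hcvc : cv H f (p₂ c) e₁ = g₂ ⟨c.val, hcl⟩ - g₂ ⟨c.val - 1, hcl2⟩ :=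
    hC.2 e₁ he₁r2 he₁i2
  have hcvb : cv H f (p₁ b) e₂ = g₁ ⟨b.val, hbk⟩ - g₁ ⟨b.val - 1, hbk2⟩ :=
    hB.2 e₂ he₂r1 he₂i1
  have hcvd : cv H f (p₂ d) e₂ = g₂ ⟨d.val, hdl⟩ - g₂ ⟨d.val - 1, hdl2⟩ :=
    hD.2 e₂ he₂r2 he₂i2
  have hoppAC : cv H f (p₂ c) e₁ = -(cv H f (p₁ a) e₁) :=
    cv_opp (joins_symm he₁) (Ne.symm (hdisj a c))
  have hoppBD : cv H f (p₂ d) e₂ = -(cv H f (p₁ b) e₂) :=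
    cv_opp (joins_symm he₂) (Ne.symm (hdisj b d))
  have hglinkAC : g₂ ⟨c.val, hcl⟩ - g₂ ⟨c.val - 1, hcl2⟩
      = -(g₁ ⟨a.val, hak⟩ - g₁ ⟨a.val - 1, hak2⟩) := by
    rw [← hcvc, ← hcva, hoppAC]
  have hglinkBD : g₂ ⟨d.val, hdl⟩ - g₂ ⟨d.val - 1, hdl2⟩
      = -(g₁ ⟨b.val, hbk⟩ - g₁ ⟨b.val - 1, hbk2⟩) := by
    rw [← hcvd, ← hcvb, hoppBD]
  have hrealAC : y ⟨c.val, hcl⟩ - y ⟨c.val - 1, hcl2⟩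
      = -(x ⟨a.val, hak⟩ - x ⟨a.val - 1, hak2⟩) := by
    apply coe5_eq
    · rw [coe5_sub, hye, hye, hglinkAC, coe5_neg, coe5_sub, hxe, hxe]
    · obtain ⟨c1, c2⟩ := hyI ⟨c.val, hcl⟩
      obtain ⟨c3, c4⟩ := hyI ⟨c.val - 1, hcl2⟩
      obtain ⟨c5, c6⟩ := hxI ⟨a.val, hak⟩
      obtain ⟨c7, c8⟩ := hxI ⟨a.val - 1, hak2⟩
      rw [abs_lt]; constructor <;> linarith
  have hrealBD : y ⟨d.val, hdl⟩ - y ⟨d.val - 1, hdl2⟩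
      = -(x ⟨b.val, hbk⟩ - x ⟨b.val - 1, hbk2⟩) := by
    apply coe5_eq
    · rw [coe5_sub, hye, hye, hglinkBD, coe5_neg, coe5_sub, hxe, hxe]
    · obtain ⟨c1, c2⟩ := hyI ⟨d.val, hdl⟩
      obtain ⟨c3, c4⟩ := hyI ⟨d.val - 1, hdl2⟩
      obtain ⟨c5, c6⟩ := hxI ⟨b.val, hbk⟩
      obtain ⟨c7, c8⟩ := hxI ⟨b.val - 1, hbk2⟩
      rw [abs_lt]; constructor <;> linarith
  have dA := dich₁ a.val ha hak hak2
  have dB := dich₁ b.val hb hbk hbk2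
  have dC := dich₂ c.val hc hcl hcl2
  have dD := dich₂ d.val hd hdl hdl2
  have keyAC : (x ⟨a.val - 1, hak2⟩ < 5 ↔ ¬ (y ⟨c.val - 1, hcl2⟩ < 5)) := by
    rcases dA with ⟨p1, p2, p3, p4⟩ | ⟨p1, p2, p3, p4⟩ <;>
      rcases dC with ⟨q1, q2, q3, q4⟩ | ⟨q1, q2, q3, q4⟩ <;>
      constructor <;> intro hh <;> (try intro h5) <;> linarith [hrealAC]
  have keyBD : (x ⟨b.val - 1, hbk2⟩ < 5 ↔ ¬ (y ⟨d.val - 1, hdl2⟩ < 5)) := by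
    rcases dB with ⟨p1, p2, p3, p4⟩ | ⟨p1, p2, p3, p4⟩ <;>
      rcases dD with ⟨q1, q2, q3, q4⟩ | ⟨q1, q2, q3, q4⟩ <;>
      constructor <;> intro hh <;> (try intro h5) <;> linarith [hrealBD]
  have pA := par₁ (a.val - 1) hak2
  have pB := par₁ (b.val - 1) hbk2
  have pC := par₂ (c.val - 1) hcl2
  have pD := par₂ (d.val - 1) hdl2
  have hEE : (Even (a.val - 1) ↔ Even (b.val - 1)) := by
    have h1 : Nat.dist a.val b.val % 2 = 0 := Nat.even_iff.1 heven
    unfold Nat.dist at h1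
    rw [Nat.even_iff, Nat.even_iff]
    omega
  have hOO : ¬ (Even (c.val - 1) ↔ Even (d.val - 1)) := by
    have h1 : Nat.dist c.val d.val % 2 = 1 := Nat.odd_iff.1 hodd
    unfold Nat.dist at h1
    rw [Nat.even_iff, Nat.even_iff]
    omega
  exact parity_contra keyAC keyBD pA pB pC pD hEE hOO
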